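/- Define the Hecke-type operator T_{m,ℓ} = Σ_{ad = m} a^{ℓ-1} B_a U_d acting on Laurent series, and the classical Hecke operator of weight k by T_d = T_{d,k}. Then for arbitrary integers k and ℓ, T_{m,ℓ} = Σ_{ad = m} c_{k,ℓ}(a) B_a T_d, where c_{k,ℓ}(a) = Σ_{r | a} r^{ℓ-1} μ(a/r) (a/r)^{k-1} and μ is the Möbius function. -/

import Mathlib

open scoped ArithmeticFunction

/-- `B_a` on formal Laurent series: `Σ aₙ qⁿ ↦ Σ aₙ q^{an}`. -/
noncomputable def Bop (a : ℕ) (f : ℤ → ℂ) : ℤ → ℂ :=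
  fun n => if (a : ℤ) ∣ n then f (n / a) else 0

/-- `U_d` on formal Laurent series: `Σ aₙ qⁿ ↦ Σ a_{dn} qⁿ`. -/
noncomputable def Uop (d : ℕ) (f : ℤ → ℂ) : ℤ → ℂ :=
  fun n => f (d * n)

/-- The Hecke-type operator `T_{m,ℓ} = Σ_{ad = m} a^{ℓ-1} B_a U_d` acting on
Laurent series. The classical Hecke operator of weight `k` is `T_d = T_{d,k}`. -/
noncomputable def Theck (m : ℕ) (ℓ : ℤ) (f : ℤ → ℂ) : ℤ → ℂ :=
  fun n => ∑ p ∈ Nat.divisorsAntidiagonal m, (p.1 : ℂ) ^ (ℓ - 1) * Bop p.1 (Uop p.2 f) n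

/-- `c_{k,ℓ}(a) = Σ_{r ∣ a} r^{ℓ-1} μ(a/r) (a/r)^{k-1}` where `μ` is the
Möbius function. -/
noncomputable def cHecke (k ℓ : ℤ) (a : ℕ) : ℂ :=
  ∑ r ∈ a.divisors, (r : ℂ) ^ (ℓ - 1) * (ArithmeticFunction.moebius (a / r) : ℂ) * ((a / r : ℕ) : ℂ) ^ (k - 1)

lemma Bop_Bop (a b : ℕ) (ha : a ≠ 0) (hb : b ≠ 0) (g : ℤ → ℂ) (n : ℤ) :
    Bop a (Bop b g) n = Bop (a * b) g n := by
  have ha' : (a:ℤ) ≠ 0 := by exact_mod_cast ha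
  have hb' : (b:ℤ) ≠ 0 := by exact_mod_cast hb
  unfold Bop
  by_cases h : ((a : ℤ) * b) ∣ n
  · obtain ⟨t, rfl⟩ := h
    rw [if_pos ⟨b * t, by ring⟩]
    rw [show (a:ℤ) * b * t / a = b * t by
      rw [mul_assoc]; exact Int.mul_ediv_cancel_left _ ha']
    rw [if_pos ⟨t, rfl⟩, Int.mul_ediv_cancel_left _ hb']
    rw [if_pos ⟨t, rfl⟩]
    push_cast
    rw [Int.mul_ediv_cancel_left _ (by exact mul_ne_zero ha' hb')]
  · have hR : (if ((a * b : ℕ) : ℤ) ∣ n then g (n / ((a * b : ℕ) : ℤ)) else 0) = 0 :=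
      if_neg (by push_cast; exact h)
    rw [hR]
    by_cases h1 : (a:ℤ) ∣ n
    · rw [if_pos h1]
      rw [if_neg]
      intro h2
      obtain ⟨s, hs⟩ := h1
      obtain ⟨t, ht⟩ := h2
      apply h
      refine ⟨t, ?_⟩
      rw [hs] at ht ⊢
      rw [Int.mul_ediv_cancel_left _ ha'] at ht
      rw [ht]; ring
    · rw [if_neg h1]

lemma Bop_sum {ι : Type*} (a : ℕ) (s : Finset ι) (g : ι → ℤ → ℂ) (n : ℤ) :
    Bop a (fun x => ∑ i ∈ s, g i x) n = ∑ i ∈ s, Bop a (g i) n := by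
  unfold Bop
  split <;> simp

/-- Reindexing of iterated divisor sums, following `ArithmeticFunction.mul_smul'`. -/
lemma triple_sum (m : ℕ) (F : ℕ → ℕ → ℕ → ℂ) :
    ∑ p ∈ Nat.divisorsAntidiagonal m, ∑ q ∈ Nat.divisorsAntidiagonal p.2, F p.1 q.1 q.2 =
    ∑ p ∈ Nat.divisorsAntidiagonal m, ∑ q ∈ Nat.divisorsAntidiagonal p.1, F q.1 q.2 p.2 := by
  rw [Finset.sum_sigma', Finset.sum_sigma']
  apply Finset.sum_nbij' (fun ⟨⟨a, _d⟩, ⟨b, e⟩⟩ ↦ ⟨(a * b, e), (a, b)⟩)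
    (fun ⟨⟨_A, e⟩, ⟨a, b⟩⟩ ↦ ⟨(a, b * e), (b, e)⟩) <;>
  aesop (add simp mul_assoc)

lemma moebius_divisor_sum (t : ℕ) (_ht : t ≠ 0) :
    ∑ q ∈ Nat.divisorsAntidiagonal t, ((ArithmeticFunction.moebius q.1 : ℤ) : ℂ) = if t = 1 then 1 else 0 := by
  have h := congrArg (fun F : ArithmeticFunction ℂ => F t)
    (ArithmeticFunction.coe_moebius_mul_coe_zeta (R := ℂ))
  simp only [ArithmeticFunction.mul_apply, ArithmeticFunction.one_apply] at h
  rw [← h]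
  apply Finset.sum_congr rfl
  intro q hq
  rw [Nat.mem_divisorsAntidiagonal] at hq
  have : q.2 ≠ 0 := fun h0 => hq.2 (by rw [← hq.1, h0, mul_zero])
  simp [ArithmeticFunction.intCoe_apply, ArithmeticFunction.natCoe_apply,
    ArithmeticFunction.zeta_apply, this]

lemma cHecke_eq (k ℓ : ℤ) (a : ℕ) :
    cHecke k ℓ a = ∑ q ∈ Nat.divisorsAntidiagonal a,
      (q.1 : ℂ) ^ (ℓ - 1) * (ArithmeticFunction.moebius q.2 : ℂ) * (q.2 : ℂ) ^ (k - 1) := by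
  rw [cHecke, ← Nat.sum_divisorsAntidiagonal
    (fun r s => (r : ℂ) ^ (ℓ - 1) * (ArithmeticFunction.moebius s : ℂ) * (s : ℂ) ^ (k - 1))]

lemma coeff_sum (A : ℕ) (hA : A ≠ 0) (k ℓ : ℤ) :
    ∑ p ∈ Nat.divisorsAntidiagonal A, cHecke k ℓ p.1 * (p.2 : ℂ) ^ (k - 1) =
      (A : ℂ) ^ (ℓ - 1) := by
  simp only [cHecke_eq, Finset.sum_mul]
  refine Eq.trans (triple_sum A
    (fun r s b => (r : ℂ) ^ (ℓ - 1) * (ArithmeticFunction.moebius s : ℂ) * (s : ℂ) ^ (k - 1) * (b : ℂ) ^ (k - 1))).symm ?_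
  beta_reduce
  have step : ∀ p ∈ Nat.divisorsAntidiagonal A,
      (∑ q ∈ Nat.divisorsAntidiagonal p.2,
        (p.1 : ℂ) ^ (ℓ - 1) * (ArithmeticFunction.moebius q.1 : ℂ) * (q.1 : ℂ) ^ (k - 1) * (q.2 : ℂ) ^ (k - 1)) =
      (p.1 : ℂ) ^ (ℓ - 1) * (if p.2 = 1 then 1 else 0) * (p.2 : ℂ) ^ (k - 1) := by
    intro p hp
    rw [Nat.mem_divisorsAntidiagonal] at hp
    have hp2 : p.2 ≠ 0 := fun h0 => hp.2 (by rw [← hp.1, h0, mul_zero])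
    rw [show (p.1 : ℂ) ^ (ℓ - 1) * (if p.2 = 1 then 1 else 0) * (p.2 : ℂ) ^ (k - 1)
        = (∑ q ∈ Nat.divisorsAntidiagonal p.2, ((ArithmeticFunction.moebius q.1 : ℤ) : ℂ)) *
          ((p.1 : ℂ) ^ (ℓ - 1) * (p.2 : ℂ) ^ (k - 1)) by
      rw [moebius_divisor_sum p.2 hp2]; ring]
    rw [Finset.sum_mul]
    apply Finset.sum_congr rfl
    intro q hq
    rw [Nat.mem_divisorsAntidiagonal] at hq
    have : ((q.1 : ℂ)) * q.2 = (p.2 : ℂ) := by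
      rw [← hq.1]; push_cast; ring
    rw [show ((p.2 : ℂ)) ^ (k-1) = ((q.1 : ℂ) * q.2) ^ (k-1) by rw [this],
      mul_zpow]
    ring
  rw [Finset.sum_congr rfl step]
  rw [Finset.sum_eq_single (A, 1)]
  · simp
  · rintro ⟨b, c⟩ hb hne
    rw [Nat.mem_divisorsAntidiagonal] at hb
    have : c ≠ 1 := by
      rintro rfl
      exact hne (by rw [Prod.mk.injEq]; exact ⟨by rw [← hb.1, mul_one], rfl⟩)
    simp [this]
  · intro h
    exact absurd (Nat.mem_divisorsAntidiagonal.2 ⟨mul_one A, hA⟩) h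

theorem Top_eq_sum_cHecke (m : ℕ) (hm : 0 < m) (k ℓ : ℤ) (f : ℤ → ℂ) :
    Theck m ℓ f =
      fun n => ∑ p ∈ Nat.divisorsAntidiagonal m,
        cHecke k ℓ p.1 * Bop p.1 (Theck p.2 k f) n := by
  funext n
  have expand : ∀ p ∈ Nat.divisorsAntidiagonal m,
      cHecke k ℓ p.1 * Bop p.1 (Theck p.2 k f) n =
      ∑ q ∈ Nat.divisorsAntidiagonal p.2,
        cHecke k ℓ p.1 * ((q.1 : ℂ) ^ (k - 1) * Bop (p.1 * q.1) (Uop q.2 f) n) := by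
    intro p hp
    rw [Nat.mem_divisorsAntidiagonal] at hp
    have hp1 : p.1 ≠ 0 := fun h0 => hp.2 (by rw [← hp.1, h0, zero_mul])
    rw [show Theck p.2 k f = fun x => ∑ q ∈ Nat.divisorsAntidiagonal p.2,
        (fun q x => (q.1 : ℂ) ^ (k - 1) * Bop q.1 (Uop q.2 f) x) q x from rfl]
    rw [Bop_sum, Finset.mul_sum]
    apply Finset.sum_congr rfl
    intro q hq
    rw [Nat.mem_divisorsAntidiagonal] at hq
    have hq1 : q.1 ≠ 0 := fun h0 => by
      apply hp.2; rw [← hp.1, ← hq.1, h0, zero_mul, mul_zero]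
    congr 1
    rw [show Bop p.1 (fun x => (q.1:ℂ) ^ (k-1) * Bop q.1 (Uop q.2 f) x) n
        = (q.1:ℂ)^(k-1) * Bop p.1 (Bop q.1 (Uop q.2 f)) n by
      unfold Bop; split <;> simp]
    rw [Bop_Bop p.1 q.1 hp1 hq1]
  rw [Finset.sum_congr rfl expand]
  refine Eq.trans ?_ (triple_sum m
    (fun a b e => cHecke k ℓ a * ((b : ℂ) ^ (k - 1) * Bop (a * b) (Uop e f) n))).symm
  beta_reduce
  show Theck m ℓ f n = _
  rw [Theck]
  apply Finset.sum_congr rfl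
  intro p hp
  rw [Nat.mem_divisorsAntidiagonal] at hp
  have hp1 : p.1 ≠ 0 := fun h0 => hp.2 (by rw [← hp.1, h0, zero_mul])
  have : ∀ q ∈ Nat.divisorsAntidiagonal p.1,
      cHecke k ℓ q.1 * ((q.2 : ℂ) ^ (k - 1) * Bop (q.1 * q.2) (Uop p.2 f) n) =
      (cHecke k ℓ q.1 * (q.2 : ℂ) ^ (k - 1)) * Bop p.1 (Uop p.2 f) n := by
    intro q hq
    rw [Nat.mem_divisorsAntidiagonal] at hq
    rw [hq.1]; ring
  rw [Finset.sum_congr rfl this, ← Finset.sum_mul, coeff_sum p.1 hp1 k ℓ]
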